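/- Let β ≥ 0, γ > 0, ε > 0, and T > 0. Let μ : [0, T] → ℝ be the unique solution of the initial value problem μ(0) = ε, μ′(s) = β·μ(s) + (γ²·(1+ε)/2)·(1 + 1/μ(s)) + β for s ∈ [0, T]. Then there exists a constant c > 0 such that, setting ν(s) := exp( c·∫₀ˢ (1 + μ(r)) dr ), the function φ(s, x) := ν(s)·(1+x)^{1+μ(s)} satisfies, for every (s, x) ∈ [0, T] × [0, ∞) and every z ∈ ℝ^d (d ≥ 1): −∂ₓφ(s, x)·( β·x·(ln x)·𝟙_{x>1} + γ·|z|·√(|ln|z||) ) + (1/2)·∂ₓₓφ(s, x)·|z|² + ∂ₛφ(s, x) ≥ 0, where the map z ↦ |z|·√(|ln|z||) is extended by the value 0 at z = 0. -/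

import Mathlib

/-- For `0 < a ≤ 1`, one has `a·√|log a| ≤ 1`. -/
lemma aux_small_sqrt_log (a : ℝ) (h0 : 0 < a) (h1 : a ≤ 1) :
    a * Real.sqrt |Real.log a| ≤ 1 := by
  have hla : Real.log a ≤ 0 := Real.log_nonpos h0.le h1
  have habs : |Real.log a| = -Real.log a := abs_of_nonpos hla
  have hinv : -Real.log a ≤ a⁻¹ := by
    have h := Real.log_le_sub_one_of_pos (inv_pos.2 h0)
    rw [Real.log_inv] at h
    linarith [inv_pos.2 h0]
  calc a * Real.sqrt |Real.log a| ≤ a * Real.sqrt a⁻¹ := by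
        apply mul_le_mul_of_nonneg_left _ h0.le
        exact Real.sqrt_le_sqrt (by rw [habs]; exact hinv)
    _ = a * (Real.sqrt a)⁻¹ := by rw [Real.sqrt_inv]
    _ = a / Real.sqrt a := by ring
    _ = Real.sqrt a := Real.div_sqrt
    _ ≤ 1 := by
        have := Real.sqrt_le_sqrt h1
        simpa using this

set_option maxHeartbeats 1600000 in
open Classical in
/-- Proposition 5.2 (case `λ = 1/2`): for `β ≥ 0`, `γ > 0`, `ε > 0`, `T > 0` and `μ` the
solution of the IVP `μ(0) = ε`, `μ′ = β·μ + (γ²(1+ε)/2)·(1 + 1/μ) + β` on `[0,T]`, there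
is a constant `c > 0` such that, with `ν(s) := exp(c·∫₀ˢ (1+μ(r)) dr)` and
`φ(s,x) := ν(s)·(1+x)^{1+μ(s)}`, one has
`−∂ₓφ·(β·x·ln x·𝟙_{x>1} + γ·|z|·√(|ln|z||)) + (1/2)·∂ₓₓφ·|z|² + ∂ₛφ ≥ 0` for all
`(s,x) ∈ [0,T]×[0,∞)` and `z ∈ ℝ^d` (the map `z ↦ |z|·√(|ln|z||)` extended by `0` at
`z = 0`). -/
theorem stmt_13 (β γ ε T : ℝ) (d : ℕ) (hd : 1 ≤ d)
    (hβ : 0 ≤ β) (hγ : 0 < γ) (hε : 0 < ε) (hT : 0 < T)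
    (μ : ℝ → ℝ) (hμ0 : μ 0 = ε) (hμpos : ∀ s ∈ Set.Icc 0 T, 0 < μ s)
    (hμderiv : ∀ s ∈ Set.Icc 0 T,
      HasDerivWithinAt μ (β * μ s + γ ^ 2 * (1 + ε) / 2 * (1 + 1 / μ s) + β)
        (Set.Icc 0 T) s) :
    ∃ c : ℝ, 0 < c ∧
    ∃ φ φs φx φxx : ℝ → ℝ → ℝ,
      (∀ s x, φ s x =
        Real.exp (c * ∫ r in (0 : ℝ)..s, (1 + μ r)) * (1 + x) ^ (1 + μ s)) ∧
      (∀ s ∈ Set.Icc 0 T, ∀ x ∈ Set.Ici (0 : ℝ),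
        HasDerivWithinAt (fun t => φ t x) (φs s x) (Set.Icc 0 T) s ∧
        HasDerivWithinAt (fun u => φ s u) (φx s x) (Set.Ici 0) x ∧
        HasDerivWithinAt (fun u => φx s u) (φxx s x) (Set.Ici 0) x) ∧
      ∀ s ∈ Set.Icc 0 T, ∀ x ∈ Set.Ici (0 : ℝ), ∀ z : EuclideanSpace ℝ (Fin d),
        0 ≤ -φx s x * ((if 1 < x then β * x * Real.log x else 0)
              + γ * (if z = 0 then 0 else ‖z‖ * Real.sqrt |Real.log ‖z‖|))
            + 1 / 2 * φxx s x * ‖z‖ ^ 2 + φs s x := by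
  have hμcont : ContinuousOn μ (Set.Icc 0 T) := fun s hs =>
    (hμderiv s hs).continuousWithinAt
  obtain ⟨s₀, hs₀, hmin⟩ :=
    isCompact_Icc.exists_isMinOn (Set.nonempty_Icc.2 hT.le) hμcont
  have hm₀ : 0 < μ s₀ := hμpos s₀ hs₀
  set m₀ : ℝ := μ s₀ with hm₀def
  have hmin' : ∀ s ∈ Set.Icc 0 T, m₀ ≤ μ s := fun s hs => hmin hs
  have hε1 : (0:ℝ) < 1 + ε := by linarith
  set t₀ : ℝ := 2 * ε / (1 + ε) with ht₀def
  have ht₀ : 0 < t₀ := by positivity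
  have hst₀ : 0 < Real.sqrt t₀ := Real.sqrt_pos.2 ht₀
  set R : ℝ := 1 + 2 * γ / (m₀ * Real.sqrt t₀) with hRdef
  have hR1 : 1 ≤ R := by
    rw [hRdef]
    have : 0 ≤ 2 * γ / (m₀ * Real.sqrt t₀) :=
      div_nonneg (by linarith) (mul_nonneg hm₀.le hst₀.le)
    linarith
  have hR0 : 0 < R := lt_of_lt_of_le one_pos hR1
  set A : ℝ := (1 + ε) * Real.log R with hAdef
  have hA0 : 0 ≤ A := mul_nonneg hε1.le (Real.log_nonneg hR1)
  set c : ℝ := γ + 1 + γ ^ 2 * A / (2 * m₀) with hcdef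
  have hc : 0 < c := by
    have : 0 ≤ γ ^ 2 * A / (2 * m₀) := div_nonneg (by positivity) (by linarith)
    rw [hcdef]; linarith
  have hγc : γ ≤ c := by
    have : 0 ≤ γ ^ 2 * A / (2 * m₀) := div_nonneg (by positivity) (by linarith)
    rw [hcdef]; linarith
  refine ⟨c, hc, ?_⟩
  set I : ℝ → ℝ := fun s => ∫ r in (0:ℝ)..s, (1 + μ r) with hIdef
  -- fundamental theorem of calculus for I
  have hI : ∀ s ∈ Set.Icc 0 T, HasDerivWithinAt I (1 + μ s) (Set.Icc 0 T) s := by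
    intro s hs
    set g : ℝ → ℝ := fun r => 1 + μ (min T (max 0 r)) with hgdef
    have hmem : ∀ r : ℝ, min T (max 0 r) ∈ Set.Icc 0 T := by
      intro r
      exact ⟨le_min hT.le (le_max_left 0 r), min_le_left _ _⟩
    have hgc : Continuous g := by
      apply Continuous.add continuous_const
      exact hμcont.comp_continuous
        (continuous_const.min (continuous_const.max continuous_id)) hmem
    have hF : HasDerivAt (fun u => ∫ r in (0:ℝ)..u, g r) (g s) s :=
      (hgc.integral_hasStrictDerivAt 0 s).hasDerivAt
    have heq : ∀ u ∈ Set.Icc (0:ℝ) T, I u = ∫ r in (0:ℝ)..u, g r := by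
      intro u hu
      apply intervalIntegral.integral_congr
      intro r hr
      rw [Set.uIcc_of_le hu.1] at hr
      have hrT : r ∈ Set.Icc 0 T := ⟨hr.1, le_trans hr.2 hu.2⟩
      rw [hgdef]
      simp only [max_eq_right hrT.1, min_eq_right hrT.2]
    have hgs : g s = 1 + μ s := by
      rw [hgdef]; simp only [max_eq_right hs.1, min_eq_right hs.2]
    rw [← hgs]
    exact hF.hasDerivWithinAt.congr heq (heq s hs)
  refine ⟨fun s x => Real.exp (c * I s) * (1 + x) ^ (1 + μ s),
    fun s x => Real.exp (c * I s) * (1 + x) ^ (1 + μ s) *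
      (c * (1 + μ s) + Real.log (1 + x) *
        (β * μ s + γ ^ 2 * (1 + ε) / 2 * (1 + 1 / μ s) + β)),
    fun s x => Real.exp (c * I s) * (1 + μ s) * (1 + x) ^ (μ s),
    fun s x => Real.exp (c * I s) * (1 + μ s) * (μ s * (1 + x) ^ (μ s - 1)),
    fun s x => rfl, ?_, ?_⟩
  · -- derivatives
    intro s hs x hx
    have hx0 : (0:ℝ) ≤ x := hx
    have hb : (0:ℝ) < 1 + x := by linarith
    have hν : HasDerivWithinAt (fun t => Real.exp (c * I t))
        (Real.exp (c * I s) * (c * (1 + μ s))) (Set.Icc 0 T) s :=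
      ((hI s hs).const_mul c).exp
    have hL : HasDerivWithinAt (fun t => (1 + x) ^ (1 + μ t))
        ((1 + x) ^ (1 + μ s) * (Real.log (1 + x) *
          (β * μ s + γ ^ 2 * (1 + ε) / 2 * (1 + 1 / μ s) + β))) (Set.Icc 0 T) s := by
      have h1 : HasDerivWithinAt (fun t => Real.log (1 + x) * (1 + μ t))
          (Real.log (1 + x) *
            (β * μ s + γ ^ 2 * (1 + ε) / 2 * (1 + 1 / μ s) + β)) (Set.Icc 0 T) s :=
        ((hμderiv s hs).const_add 1).const_mul _
      have h2 := h1.exp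
      simp only [← Real.rpow_def_of_pos hb] at h2
      exact h2
    refine ⟨?_, ?_, ?_⟩
    · have h : HasDerivWithinAt (fun t => Real.exp (c * I t) * (1 + x) ^ (1 + μ t)) _
          (Set.Icc 0 T) s := hν.mul hL
      convert h using 1
      ring
    · have h1 : HasDerivAt (fun u : ℝ => 1 + u) 1 x := by
        simpa using (hasDerivAt_id x).const_add (1:ℝ)
      have h2 : HasDerivAt (fun y : ℝ => y ^ (1 + μ s))
          ((1 + μ s) * (1 + x) ^ (1 + μ s - 1)) (1 + x) :=
        Real.hasDerivAt_rpow_const (Or.inl (ne_of_gt hb))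
      have h3 : HasDerivWithinAt (fun u => Real.exp (c * I s) * (1 + u) ^ (1 + μ s))
          (Real.exp (c * I s) * ((1 + μ s) * (1 + x) ^ (1 + μ s - 1) * 1)) (Set.Ici 0) x :=
        ((h2.comp x h1).const_mul (Real.exp (c * I s))).hasDerivWithinAt
      have he : (1:ℝ) + μ s - 1 = μ s := by ring
      rw [he] at h3
      convert h3 using 1
      ring
    · have h1 : HasDerivAt (fun u : ℝ => 1 + u) 1 x := by
        simpa using (hasDerivAt_id x).const_add (1:ℝ)
      have h2 : HasDerivAt (fun y : ℝ => y ^ (μ s))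
          (μ s * (1 + x) ^ (μ s - 1)) (1 + x) :=
        Real.hasDerivAt_rpow_const (Or.inl (ne_of_gt hb))
      have h3 : HasDerivWithinAt (fun u => Real.exp (c * I s) * (1 + μ s) * (1 + u) ^ (μ s))
          (Real.exp (c * I s) * (1 + μ s) * (μ s * (1 + x) ^ (μ s - 1) * 1)) (Set.Ici 0) x :=
        ((h2.comp x h1).const_mul (Real.exp (c * I s) * (1 + μ s))).hasDerivWithinAt
      convert h3 using 1
      ring
  · -- the inequality
    intro s hs x hx z
    dsimp only
    have hx0 : (0:ℝ) ≤ x := hx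
    have hb : (0:ℝ) < 1 + x := by linarith
    have hb1 : (1:ℝ) ≤ 1 + x := by linarith
    have hM0 : 0 < μ s := hμpos s hs
    have hMm : m₀ ≤ μ s := hmin' s hs
    set M : ℝ := μ s with hMdef
    set b : ℝ := 1 + x with hbdef
    have hL0 : 0 ≤ Real.log b := Real.log_nonneg hb1
    set L : ℝ := Real.log b with hLdef
    have hV0 : 0 < Real.exp (c * I s) := Real.exp_pos _
    set V : ℝ := Real.exp (c * I s) with hVdef
    have ha0 : (0:ℝ) ≤ ‖z‖ := norm_nonneg z
    set a : ℝ := ‖z‖ with hadef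
    set B : ℝ := (if 1 < x then β * x * Real.log x else 0) with hBdef
    set G : ℝ := (if z = 0 then 0 else a * Real.sqrt |Real.log a|) with hGdef
    -- basic bound on the drift term
    have hBle : b * B ≤ β * (b ^ 2 * L) := by
      rw [hBdef]
      split_ifs with hx1
      · have hlx : 0 ≤ Real.log x := Real.log_nonneg hx1.le
        have hxb : x ≤ b := by rw [hbdef]; linarith
        have h1 : Real.log x ≤ L := by
          rw [hLdef]
          exact (Real.log_le_log_iff (by linarith) hb).2 hxb
        have h2 : x * Real.log x ≤ b * L := mul_le_mul hxb h1 hlx hb.le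
        have h3 := mul_le_mul_of_nonneg_left h2 (mul_nonneg hβ hb.le)
        calc b * (β * x * Real.log x) = β * b * (x * Real.log x) := by ring
          _ ≤ β * b * (b * L) := h3
          _ = β * (b ^ 2 * L) := by ring
      · have : 0 ≤ β * (b ^ 2 * L) := mul_nonneg hβ (mul_nonneg (sq_nonneg b) hL0)
        linarith
    have t1 : 0 ≤ M ^ 2 * a ^ 2 := by positivity
    have t2 : 0 ≤ γ ^ 2 * (1 + ε) * (b ^ 2 * L) :=
      mul_nonneg (by positivity) (mul_nonneg (sq_nonneg b) hL0)
    have t3 : 0 ≤ 2 * M * c * b ^ 2 :=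
      mul_nonneg (mul_nonneg (by linarith) hc.le) (sq_nonneg b)
    -- the key bound on the noise term
    have hGle : 2 * M * γ * b * G ≤
        M ^ 2 * a ^ 2 + γ ^ 2 * (1 + ε) * (b ^ 2 * L) + 2 * M * c * b ^ 2 := by
      rw [hGdef]
      split_ifs with hz
      · rw [mul_zero]; linarith
      · have haz : 0 < a := by rw [hadef]; exact norm_pos_iff.2 hz
        have e0 : (0:ℝ) ≤ 2 * M * γ * b :=
          mul_nonneg (mul_nonneg (by linarith) hγ.le) hb.le
        rcases le_or_gt a 1 with h1 | h1
        · have hG1 : a * Real.sqrt |Real.log a| ≤ 1 := aux_small_sqrt_log a haz h1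
          have hbb : b ≤ b ^ 2 := by nlinarith [hb1, hb]
          have h4 : γ * b ≤ c * b ^ 2 := mul_le_mul hγc hbb hb.le hc.le
          have h5 := mul_le_mul_of_nonneg_left h4 (show (0:ℝ) ≤ 2 * M by linarith)
          calc 2 * M * γ * b * (a * Real.sqrt |Real.log a|)
              ≤ 2 * M * γ * b * 1 := mul_le_mul_of_nonneg_left hG1 e0
            _ = 2 * M * (γ * b) := by ring
            _ ≤ 2 * M * (c * b ^ 2) := h5
            _ = 2 * M * c * b ^ 2 := by ring
            _ ≤ _ := by linarith
        · -- a > 1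
          have hla : 0 < Real.log a := Real.log_pos h1
          have habs : |Real.log a| = Real.log a := abs_of_pos hla
          rw [habs]
          have hAc : γ ^ 2 * A ≤ 2 * M * c := by
            have hd1 : γ ^ 2 * A / (2 * m₀) ≤ c := by rw [hcdef]; linarith
            have hd2 : γ ^ 2 * A ≤ c * (2 * m₀) := by
              rw [← div_le_iff₀ (by linarith : (0:ℝ) < 2 * m₀)]
              exact hd1
            have hd3 : m₀ * c ≤ M * c := mul_le_mul_of_nonneg_right hMm hc.le
            linarith
          rcases le_or_gt (Real.log a) ((1 + ε) * L + A) with hcase | hcase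
          · -- moderate a : AM-GM
            have hsq := two_mul_le_add_sq (M * a) (γ * b * Real.sqrt (Real.log a))
            have hs2 : Real.sqrt (Real.log a) ^ 2 = Real.log a := Real.sq_sqrt hla.le
            have he1 : (M * a) ^ 2 = M ^ 2 * a ^ 2 := by ring
            have he2 : (γ * b * Real.sqrt (Real.log a)) ^ 2
                = γ ^ 2 * b ^ 2 * Real.log a := by
              rw [mul_pow, mul_pow, hs2]
            have h3 : γ ^ 2 * b ^ 2 * Real.log a
                ≤ γ ^ 2 * b ^ 2 * ((1 + ε) * L + A) :=
              mul_le_mul_of_nonneg_left hcase (by positivity)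
            have h4 : γ ^ 2 * A * b ^ 2 ≤ 2 * M * c * b ^ 2 :=
              mul_le_mul_of_nonneg_right hAc (sq_nonneg b)
            linarith [hsq, he1, he2, h3, h4]
          · -- large a
            have hbe : b ≤ a ^ ((1:ℝ)/(1 + ε)) * Real.exp (-(A/(1 + ε))) := by
              have h1' : L ≤ (Real.log a - A) / (1 + ε) := by
                rw [le_div_iff₀ hε1]; linarith
              calc b = Real.exp L := by rw [hLdef, Real.exp_log hb]
                _ ≤ Real.exp ((Real.log a - A) / (1 + ε)) := Real.exp_le_exp.2 h1'
                _ = a ^ ((1:ℝ)/(1 + ε)) * Real.exp (-(A/(1 + ε))) := by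
                    rw [Real.rpow_def_of_pos haz, ← Real.exp_add]
                    congr 1
                    ring
            have hlog_le : Real.log a ≤ a ^ t₀ / t₀ := by
              have h := Real.log_le_sub_one_of_pos (Real.rpow_pos_of_pos haz t₀)
              rw [Real.log_rpow haz] at h
              rw [le_div_iff₀ ht₀]
              linarith
            have hsqr : Real.sqrt (a ^ t₀) = a ^ (t₀/2) := by
              rw [Real.sqrt_eq_rpow, ← Real.rpow_mul haz.le]
              congr 1
              ring
            have hs3 : Real.sqrt (Real.log a) ≤ a ^ (t₀/2) / Real.sqrt t₀ := by
              calc Real.sqrt (Real.log a) ≤ Real.sqrt (a ^ t₀ / t₀) :=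
                    Real.sqrt_le_sqrt hlog_le
                _ = Real.sqrt (a ^ t₀) / Real.sqrt t₀ :=
                    Real.sqrt_div (Real.rpow_pos_of_pos haz t₀).le t₀
                _ = a ^ (t₀/2) / Real.sqrt t₀ := by rw [hsqr]
            have hSR : Real.exp (-(A/(1 + ε))) = R⁻¹ := by
              rw [hAdef]
              rw [show -((1 + ε) * Real.log R / (1 + ε)) = -Real.log R by
                field_simp]
              rw [Real.exp_neg, Real.exp_log hR0]
            have h2γ : γ * R⁻¹ / Real.sqrt t₀ ≤ m₀ / 2 := by
              have key : m₀ * Real.sqrt t₀ * R = m₀ * Real.sqrt t₀ + 2 * γ := by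
                rw [hRdef]
                field_simp
              rw [div_le_div_iff₀ hst₀ two_pos]
              calc γ * R⁻¹ * 2 = 2 * γ * R⁻¹ := by ring
                _ ≤ m₀ * Real.sqrt t₀ * R * R⁻¹ := by
                    apply mul_le_mul_of_nonneg_right _ (inv_nonneg.2 hR0.le)
                    rw [key]
                    linarith [mul_pos hm₀ hst₀]
                _ = m₀ * Real.sqrt t₀ := by
                    field_simp
            have hpow : a ^ ((1:ℝ)/(1 + ε)) * a ^ (t₀/2) * a = a ^ 2 := by
              rw [← Real.rpow_add haz, ← Real.rpow_add_one (ne_of_gt haz)]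
              rw [show (1:ℝ)/(1 + ε) + t₀/2 + 1 = 2 by
                rw [ht₀def]; field_simp; ring]
              exact Real.rpow_two a
            have hsa : 0 ≤ a * Real.sqrt (Real.log a) :=
              mul_nonneg haz.le (Real.sqrt_nonneg _)
            have hstep : b * (a * Real.sqrt (Real.log a)) ≤
                (a ^ ((1:ℝ)/(1 + ε)) * Real.exp (-(A/(1 + ε)))) *
                  (a * (a ^ (t₀/2) / Real.sqrt t₀)) := by
              apply mul_le_mul hbe _ hsa
                (mul_nonneg (Real.rpow_nonneg haz.le _) (Real.exp_nonneg _))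
              exact mul_le_mul_of_nonneg_left hs3 haz.le
            have hrw : (a ^ ((1:ℝ)/(1 + ε)) * Real.exp (-(A/(1 + ε)))) *
                  (a * (a ^ (t₀/2) / Real.sqrt t₀))
                = (R⁻¹ / Real.sqrt t₀) *
                  (a ^ ((1:ℝ)/(1 + ε)) * a ^ (t₀/2) * a) := by
              rw [hSR]; ring
            have hmain : γ * (b * (a * Real.sqrt (Real.log a))) ≤ m₀ / 2 * a ^ 2 := by
              have h5 := mul_le_mul_of_nonneg_left hstep hγ.le
              rw [hrw, hpow] at h5
              calc γ * (b * (a * Real.sqrt (Real.log a)))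
                  ≤ γ * (R⁻¹ / Real.sqrt t₀ * a ^ 2) := h5
                _ = (γ * R⁻¹ / Real.sqrt t₀) * a ^ 2 := by ring
                _ ≤ m₀ / 2 * a ^ 2 :=
                    mul_le_mul_of_nonneg_right h2γ (sq_nonneg a)
            have h6 := mul_le_mul_of_nonneg_left hmain
              (show (0:ℝ) ≤ 2 * M by linarith)
            have h7 : M * (m₀ * a ^ 2) ≤ M * (M * a ^ 2) :=
              mul_le_mul_of_nonneg_left
                (mul_le_mul_of_nonneg_right hMm (sq_nonneg a)) hM0.le
            calc 2 * M * γ * b * (a * Real.sqrt (Real.log a))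
                = 2 * M * (γ * (b * (a * Real.sqrt (Real.log a)))) := by ring
              _ ≤ 2 * M * (m₀ / 2 * a ^ 2) := h6
              _ = M * (m₀ * a ^ 2) := by ring
              _ ≤ M * (M * a ^ 2) := h7
              _ = M ^ 2 * a ^ 2 := by ring
              _ ≤ M ^ 2 * a ^ 2 + γ ^ 2 * (1 + ε) * (b ^ 2 * L)
                  + 2 * M * c * b ^ 2 := by linarith only [t2, t3]
    -- rewrite the powers
    have hpow1 : b ^ M = b ^ (M - 1) * b := by
      calc b ^ M = b ^ (M - 1 + 1) := by
            rw [show M - 1 + 1 = M by ring]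
        _ = b ^ (M - 1) * b := Real.rpow_add_one (ne_of_gt hb) (M - 1)
    have hpow2 : b ^ (1 + M) = b ^ (M - 1) * (b * b) := by
      calc b ^ (1 + M) = b ^ (M - 1 + 1 + 1) := by
            rw [show M - 1 + 1 + 1 = 1 + M by ring]
        _ = b ^ (M - 1 + 1) * b := Real.rpow_add_one (ne_of_gt hb) _
        _ = b ^ (M - 1) * b * b := by
            rw [Real.rpow_add_one (ne_of_gt hb) (M - 1)]
        _ = b ^ (M - 1) * (b * b) := by ring
    have hW0 : 0 < b ^ (M - 1) := Real.rpow_pos_of_pos hb _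
    set W : ℝ := b ^ (M - 1) with hWdef
    rw [hpow1, hpow2]
    -- the main pointwise inequality, cleared of the weight V·W
    have hQ : 0 ≤ -(2 * M * b * (B + γ * G)) + M ^ 2 * a ^ 2 + 2 * M * c * b ^ 2
        + 2 * M * β * (b ^ 2 * L) + γ ^ 2 * (1 + ε) * (b ^ 2 * L) := by
      have h1 := mul_le_mul_of_nonneg_left hBle (show (0:ℝ) ≤ 2 * M by linarith)
      have hid : 2 * M * b * (B + γ * G)
          = 2 * M * (b * B) + 2 * M * γ * b * G := by ring
      linarith
    have hinner : 0 ≤ -((1 + M) * b) * (B + γ * G) + 1 / 2 * ((1 + M) * M) * a ^ 2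
        + (b * b) * (c * (1 + M) + L * (β * M + γ ^ 2 * (1 + ε) / 2 * (1 + 1 / M) + β)) := by
      have h2M : (0:ℝ) < 2 * M := by linarith
      have hexp : 2 * M * (-((1 + M) * b) * (B + γ * G)
            + 1 / 2 * ((1 + M) * M) * a ^ 2
            + (b * b) * (c * (1 + M) + L * (β * M + γ ^ 2 * (1 + ε) / 2 * (1 + 1 / M) + β)))
          = (1 + M) * (-(2 * M * b * (B + γ * G)) + M ^ 2 * a ^ 2 + 2 * M * c * b ^ 2
            + 2 * M * β * (b ^ 2 * L) + γ ^ 2 * (1 + ε) * (b ^ 2 * L)) := by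
        field_simp
        ring
      have hkey : 2 * M * 0 ≤ 2 * M * (-((1 + M) * b) * (B + γ * G)
          + 1 / 2 * ((1 + M) * M) * a ^ 2
          + (b * b) * (c * (1 + M) + L * (β * M + γ ^ 2 * (1 + ε) / 2 * (1 + 1 / M) + β))) := by
        rw [mul_zero, hexp]
        exact mul_nonneg (by linarith) hQ
      exact le_of_mul_le_mul_left (by linarith [hkey]) h2M
    calc (0:ℝ) ≤ (V * W) * (-((1 + M) * b) * (B + γ * G)
          + 1 / 2 * ((1 + M) * M) * a ^ 2
          + (b * b) * (c * (1 + M) + L * (β * M + γ ^ 2 * (1 + ε) / 2 * (1 + 1 / M) + β))) :=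
        mul_nonneg (mul_nonneg hV0.le hW0.le) hinner
      _ = -(V * (1 + M) * (W * b)) * (B + γ * G)
          + 1 / 2 * (V * (1 + M) * (M * W)) * a ^ 2
          + V * (W * (b * b)) * (c * (1 + M) + L * (β * M + γ ^ 2 * (1 + ε) / 2 * (1 + 1 / M) + β)) := by
        ring
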